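/- (Proposition 1, primary problem) Let P be a continuous probability density on [0,∞) with finite mean μ > 0, finite second moment, and ∫_x^∞ P(ψ) dψ > 0 for every x ≥ 0. Then for every energy budget E_max_exp ≥ μ·g_e, the constrained problem of minimizing E_var(c_e) over {c_e ≥ 0 : E_exp(c_e) ≤ E_max_exp} has a unique minimizer c_e*, and this minimizer satisfies E_exp(c_e*) = E_max_exp. -/

import Mathlib

open MeasureTheory Set

/-- Expected energy consumption `E_exp(c) = μ·g_e + i_e·∫₀^{c·μ} (c·μ − ψ) P(ψ) dψ`. -/
noncomputable def Eexp (P : ℝ → ℝ) (g_e i_e μ c : ℝ) : ℝ :=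
  μ * g_e + i_e * ∫ ψ in (0:ℝ)..(c * μ), (c * μ - ψ) * P ψ

/-- One-sided energy variation `E_var(c) = g_e²·∫_{c·μ}^∞ (ψ − c·μ)² P(ψ) dψ`. -/
noncomputable def Evar (P : ℝ → ℝ) (g_e μ c : ℝ) : ℝ :=
  g_e ^ 2 * ∫ ψ in Ioi (c * μ), (ψ - c * μ) ^ 2 * P ψ


section aux
variable {P : ℝ → ℝ}

/-- rewrite H(t) as a difference of primitives -/
lemma H_eq (hP : Continuous P) (t : ℝ) :
    (∫ ψ in (0:ℝ)..t, (t - ψ) * P ψ)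
      = t * (∫ ψ in (0:ℝ)..t, P ψ) - ∫ ψ in (0:ℝ)..t, ψ * P ψ := by
  have i1 : IntervalIntegrable (fun ψ => t * P ψ) volume 0 t :=
    (continuous_const.mul hP).intervalIntegrable _ _
  have i2 : IntervalIntegrable (fun ψ => ψ * P ψ) volume 0 t :=
    (Continuous.intervalIntegrable (by fun_prop) _ _)
  simp only [sub_mul]
  rw [intervalIntegral.integral_sub i1 i2, intervalIntegral.integral_const_mul]

lemma H_cont (hP : Continuous P) :
    Continuous (fun t => ∫ ψ in (0:ℝ)..t, (t - ψ) * P ψ) := by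
  have h1 : Continuous fun t => ∫ ψ in (0:ℝ)..t, P ψ :=
    intervalIntegral.continuous_primitive (fun a b => hP.intervalIntegrable a b) 0
  have h2 : Continuous fun t => ∫ ψ in (0:ℝ)..t, ψ * P ψ :=
    intervalIntegral.continuous_primitive
      (fun a b => Continuous.intervalIntegrable (by fun_prop) a b) 0
  have : Continuous fun t => t * (∫ ψ in (0:ℝ)..t, P ψ) - ∫ ψ in (0:ℝ)..t, ψ * P ψ :=
    (continuous_id.mul h1).sub h2
  simpa only [← H_eq hP] using this

lemma H_mono (hP : Continuous P) (hP0 : ∀ x, 0 ≤ P x) {t1 t2 : ℝ}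
    (h0 : 0 ≤ t1) (h12 : t1 ≤ t2) :
    (∫ ψ in (0:ℝ)..t1, (t1 - ψ) * P ψ) ≤ ∫ ψ in (0:ℝ)..t2, (t2 - ψ) * P ψ := by
  have i1 : IntervalIntegrable (fun ψ => (t2 - ψ) * P ψ) volume 0 t1 :=
    ((continuous_const.sub continuous_id).mul hP).intervalIntegrable _ _
  have i2 : IntervalIntegrable (fun ψ => (t1 - ψ) * P ψ) volume 0 t1 :=
    ((continuous_const.sub continuous_id).mul hP).intervalIntegrable _ _
  have i3 : IntervalIntegrable (fun ψ => (t2 - ψ) * P ψ) volume t1 t2 :=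
    ((continuous_const.sub continuous_id).mul hP).intervalIntegrable _ _
  have split := intervalIntegral.integral_add_adjacent_intervals i1 i3
  have A : (∫ ψ in (0:ℝ)..t1, (t1 - ψ) * P ψ) ≤ ∫ ψ in (0:ℝ)..t1, (t2 - ψ) * P ψ :=
    intervalIntegral.integral_mono_on h0 i2 i1 fun ψ _ =>
      mul_le_mul_of_nonneg_right (by linarith) (hP0 ψ)
  have B : 0 ≤ ∫ ψ in t1..t2, (t2 - ψ) * P ψ :=
    intervalIntegral.integral_nonneg h12 fun ψ hψ =>
      mul_nonneg (by linarith [hψ.2]) (hP0 ψ)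
  linarith

/-- there is a point past x where P is positive -/
lemma exists_pos_pt (hP0 : ∀ x, 0 ≤ P x) {x : ℝ} (h : 0 < ∫ ψ in Ioi x, P ψ) :
    ∃ ψ0, x < ψ0 ∧ 0 < P ψ0 := by
  by_contra hc
  push_neg at hc
  have : (∫ ψ in Ioi x, P ψ) = 0 := by
    rw [setIntegral_congr_fun (g := fun _ => (0:ℝ)) measurableSet_Ioi
      (fun ψ hψ => le_antisymm (hc ψ hψ) (hP0 ψ))]
    simp
  linarith

/-- integrability of the variance integrand -/
lemma Vint (hP_int : IntegrableOn P (Ioi 0))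
    (hmean_int : IntegrableOn (fun x => x * P x) (Ioi 0))
    (hm2_int : IntegrableOn (fun x => x ^ 2 * P x) (Ioi 0))
    {t : ℝ} (ht : 0 ≤ t) :
    IntegrableOn (fun ψ => (ψ - t) ^ 2 * P ψ) (Ioi t) := by
  have h0 : IntegrableOn (fun ψ => ψ ^ 2 * P ψ - 2 * t * (ψ * P ψ) + t ^ 2 * P ψ) (Ioi 0) :=
    (hm2_int.sub (hmean_int.const_mul (2 * t))).add (hP_int.const_mul (t ^ 2))
  have h1 : IntegrableOn (fun ψ => (ψ - t) ^ 2 * P ψ) (Ioi 0) :=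
    h0.congr_fun (fun ψ _ => by ring) measurableSet_Ioi
  exact h1.mono_set (Ioi_subset_Ioi ht)

/-- strict antitonicity of the variance integral -/
lemma V_anti (hP : Continuous P) (hP0 : ∀ x, 0 ≤ P x)
    (hP_int : IntegrableOn P (Ioi 0))
    (hmean_int : IntegrableOn (fun x => x * P x) (Ioi 0))
    (hm2_int : IntegrableOn (fun x => x ^ 2 * P x) (Ioi 0))
    (htail : ∀ x : ℝ, 0 ≤ x → 0 < ∫ ψ in Ioi x, P ψ)
    {t1 t2 : ℝ} (h0 : 0 ≤ t1) (h12 : t1 < t2) :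
    (∫ ψ in Ioi t2, (ψ - t2) ^ 2 * P ψ) < ∫ ψ in Ioi t1, (ψ - t1) ^ 2 * P ψ := by
  have h02 : (0:ℝ) ≤ t2 := le_of_lt (lt_of_le_of_lt h0 h12)
  have I1 : IntegrableOn (fun ψ => (ψ - t1) ^ 2 * P ψ) (Ioi t1) :=
    Vint hP_int hmean_int hm2_int h0
  have I1' : IntegrableOn (fun ψ => (ψ - t1) ^ 2 * P ψ) (Ioi t2) :=
    I1.mono_set (Ioi_subset_Ioi (le_of_lt h12))
  have I2 : IntegrableOn (fun ψ => (ψ - t2) ^ 2 * P ψ) (Ioi t2) :=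
    Vint hP_int hmean_int hm2_int h02
  have step1 : (∫ ψ in Ioi t2, (ψ - t1) ^ 2 * P ψ) ≤ ∫ ψ in Ioi t1, (ψ - t1) ^ 2 * P ψ := by
    refine setIntegral_mono_set I1 ?_ (Filter.Eventually.of_forall fun ψ hψ => lt_trans h12 hψ)
    exact Filter.Eventually.of_forall fun ψ => mul_nonneg (sq_nonneg _) (hP0 ψ)
  have step2 : (∫ ψ in Ioi t2, (ψ - t2) ^ 2 * P ψ) < ∫ ψ in Ioi t2, (ψ - t1) ^ 2 * P ψ := by
    have hd : IntegrableOn (fun ψ => (ψ - t1) ^ 2 * P ψ - (ψ - t2) ^ 2 * P ψ) (Ioi t2) :=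
      I1'.sub I2
    have hpos : 0 < ∫ ψ in Ioi t2, ((ψ - t1) ^ 2 * P ψ - (ψ - t2) ^ 2 * P ψ) := by
      rw [setIntegral_pos_iff_support_of_nonneg_ae ?nn hd]
      case nn =>
        refine (ae_restrict_iff' measurableSet_Ioi).2 (Filter.Eventually.of_forall fun ψ hψ => ?_)
        have hψ' : t2 < ψ := hψ
        simp only [Pi.zero_apply]
        have h1 : (ψ - t2) ^ 2 ≤ (ψ - t1) ^ 2 := by nlinarith
        nlinarith [hP0 ψ]
      obtain ⟨ψ0, hψ0, hPψ0⟩ := exists_pos_pt hP0 (htail t2 h02)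
      set d : ℝ → ℝ := fun ψ => (ψ - t1) ^ 2 * P ψ - (ψ - t2) ^ 2 * P ψ with hdd
      have hdc : Continuous d := by fun_prop
      have hU : IsOpen (d ⁻¹' Ioi 0 ∩ Ioi t2) :=
        (isOpen_Ioi.preimage hdc).inter isOpen_Ioi
      have hmem : ψ0 ∈ d ⁻¹' Ioi 0 ∩ Ioi t2 := by
        refine ⟨?_, hψ0⟩
        show (0:ℝ) < d ψ0
        have h1 : (ψ0 - t2) ^ 2 < (ψ0 - t1) ^ 2 := by nlinarith
        simp only [hdd]
        nlinarith
      have hsub : d ⁻¹' Ioi 0 ∩ Ioi t2 ⊆ Function.support d ∩ Ioi t2 :=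
        fun ψ hψ => ⟨ne_of_gt hψ.1, hψ.2⟩
      calc (0:ENNReal) < volume (d ⁻¹' Ioi 0 ∩ Ioi t2) := hU.measure_pos volume ⟨ψ0, hmem⟩
        _ ≤ volume (Function.support d ∩ Ioi t2) := measure_mono hsub
    rw [integral_sub I1' I2] at hpos
    linarith
  linarith [step1, step2]

/-- lower bound for H(t): divergence -/
lemma H_unbounded (hP : Continuous P) (hP0 : ∀ x, 0 ≤ P x)
    (htail0 : 0 < ∫ ψ in Ioi (0:ℝ), P ψ) (M : ℝ) :
    ∃ t : ℝ, 0 < t ∧ M < ∫ ψ in (0:ℝ)..t, (t - ψ) * P ψ := by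
  obtain ⟨ψ0, hψ0, hPψ0⟩ := exists_pos_pt hP0 htail0
  have hc := hP.continuousAt (x := ψ0)
  rw [Metric.continuousAt_iff] at hc
  obtain ⟨δ, hδ, hball⟩ := hc (P ψ0 / 2) (by positivity)
  set r : ℝ := min (δ / 2) (ψ0 / 2) with hr
  have hrpos : 0 < r := lt_min (by positivity) (by positivity)
  set a : ℝ := ψ0 - r with ha'
  set b : ℝ := ψ0 + r with hb'
  have hab : a < b := by simp only [ha', hb']; linarith
  have ha : 0 < a := by
    have : r ≤ ψ0 / 2 := min_le_right _ _
    simp only [ha']; linarith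
  have hPlb : ∀ ψ ∈ Icc a b, P ψ0 / 2 ≤ P ψ := by
    intro ψ hψ
    have hd : dist ψ ψ0 < δ := by
      rw [Real.dist_eq]
      have h1 : r ≤ δ / 2 := min_le_left _ _
      have h2 := hψ.1; have h3 := hψ.2
      simp only [ha', hb'] at h2 h3
      rw [abs_lt]; constructor <;> linarith
    have := hball hd
    rw [Real.dist_eq, abs_lt] at this
    linarith [this.1, this.2]
  set κ : ℝ := P ψ0 / 2 with hκ
  have hκpos : 0 < κ := by positivity
  set t : ℝ := max (b + 1) (b + (M + 1) / (2 * r * κ)) with hts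
  have htb : b + 1 ≤ t := le_max_left _ _
  have ht2 : b + (M + 1) / (2 * r * κ) ≤ t := le_max_right _ _
  have hb0 : 0 < b := by simp only [hb']; linarith
  have htpos : 0 < t := by linarith
  refine ⟨t, htpos, ?_⟩
  have i1 : IntervalIntegrable (fun ψ => (t - ψ) * P ψ) volume 0 a :=
    ((continuous_const.sub continuous_id).mul hP).intervalIntegrable _ _
  have i2 : IntervalIntegrable (fun ψ => (t - ψ) * P ψ) volume a b :=
    ((continuous_const.sub continuous_id).mul hP).intervalIntegrable _ _
  have i3 : IntervalIntegrable (fun ψ => (t - ψ) * P ψ) volume b t :=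
    ((continuous_const.sub continuous_id).mul hP).intervalIntegrable _ _
  have split1 := intervalIntegral.integral_add_adjacent_intervals i1 (i2.trans i3)
  have split2 := intervalIntegral.integral_add_adjacent_intervals i2 i3
  have n1 : 0 ≤ ∫ ψ in (0:ℝ)..a, (t - ψ) * P ψ :=
    intervalIntegral.integral_nonneg (le_of_lt ha) fun ψ hψ =>
      mul_nonneg (by linarith [hψ.2]) (hP0 ψ)
  have n3 : 0 ≤ ∫ ψ in b..t, (t - ψ) * P ψ :=
    intervalIntegral.integral_nonneg (by linarith) fun ψ hψ =>
      mul_nonneg (by linarith [hψ.2]) (hP0 ψ)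
  have key : (b - a) * ((t - b) * κ) ≤ ∫ ψ in a..b, (t - ψ) * P ψ := by
    have hm := intervalIntegral.integral_mono_on (f := fun _ => (t - b) * κ)
      (μ := volume) (le_of_lt hab) intervalIntegrable_const i2
      (fun ψ hψ => by
        show (t - b) * κ ≤ (t - ψ) * P ψ
        have h1 : t - b ≤ t - ψ := by linarith [hψ.2]
        have h2 : κ ≤ P ψ := hPlb ψ hψ
        have h3 : 0 ≤ t - b := by linarith
        nlinarith [hP0 ψ, hκpos])
    rw [intervalIntegral.integral_const, smul_eq_mul] at hm
    exact hm
  have hba : b - a = 2 * r := by simp only [ha', hb']; ring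
  have hM : M + 1 ≤ (b - a) * ((t - b) * κ) := by
    rw [hba]
    have h1 : (M + 1) / (2 * r * κ) ≤ t - b := by linarith
    have h2 : 0 < 2 * r * κ := by positivity
    calc M + 1 = (M + 1) / (2 * r * κ) * (2 * r * κ) := by field_simp
      _ ≤ (t - b) * (2 * r * κ) := mul_le_mul_of_nonneg_right h1 (le_of_lt h2)
      _ = 2 * r * ((t - b) * κ) := by ring
  linarith [split1, split2, n1, n3, key, hM]

end aux


/-- (Proposition 1, primary problem) For a continuous density `P` on `[0,∞)` with finite
mean `μ > 0`, finite second moment and positive upper tails, for every energy budget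
`E_max_exp ≥ μ·g_e` the problem of minimizing `E_var` over
`{c_e ≥ 0 : E_exp(c_e) ≤ E_max_exp}` has a unique minimizer, which moreover satisfies
`E_exp(c_e*) = E_max_exp`. -/
theorem stmt_3 (P : ℝ → ℝ) (g_e i_e μ E_max_exp : ℝ)
    (hg : 0 < g_e) (hi : 0 < i_e)
    (hP_cont : Continuous P)
    (hP_nonneg : ∀ x, 0 ≤ P x)
    (hP_supp : ∀ x, x < 0 → P x = 0)
    (hP_int : IntegrableOn P (Ioi 0))
    (hP_norm : (∫ x in Ioi (0:ℝ), P x) = 1)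
    (hmean_int : IntegrableOn (fun x => x * P x) (Ioi 0))
    (hμ : μ = ∫ x in Ioi (0:ℝ), x * P x)
    (hμ_pos : 0 < μ)
    (hm2_int : IntegrableOn (fun x => x ^ 2 * P x) (Ioi 0))
    (htail : ∀ x : ℝ, 0 ≤ x → 0 < ∫ ψ in Ioi x, P ψ)
    (hEmax : μ * g_e ≤ E_max_exp) :
    ∃ cstar : ℝ,
      (0 ≤ cstar ∧ Eexp P g_e i_e μ cstar ≤ E_max_exp ∧
        ∀ c : ℝ, 0 ≤ c → Eexp P g_e i_e μ c ≤ E_max_exp →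
          Evar P g_e μ cstar ≤ Evar P g_e μ c) ∧
      (∀ c : ℝ,
        (0 ≤ c ∧ Eexp P g_e i_e μ c ≤ E_max_exp ∧
          ∀ c' : ℝ, 0 ≤ c' → Eexp P g_e i_e μ c' ≤ E_max_exp →
            Evar P g_e μ c ≤ Evar P g_e μ c') → c = cstar) ∧
      Eexp P g_e i_e μ cstar = E_max_exp := by
  -- monotonicity of Eexp
  have hFmono : ∀ c1 c2 : ℝ, 0 ≤ c1 → c1 ≤ c2 →
      Eexp P g_e i_e μ c1 ≤ Eexp P g_e i_e μ c2 := by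
    intro c1 c2 h1 h12
    have hH := H_mono hP_cont hP_nonneg (t1 := c1 * μ) (t2 := c2 * μ)
      (mul_nonneg h1 hμ_pos.le) (by nlinarith)
    simp only [Eexp]
    nlinarith
  -- continuity of Eexp
  have hFcont : Continuous (fun c => Eexp P g_e i_e μ c) := by
    have hHc := H_cont (P := P) hP_cont
    simp only [Eexp]
    exact continuous_const.add (continuous_const.mul
      (hHc.comp (continuous_id.mul continuous_const)))
  -- strict antitonicity of Evar
  have hVanti : ∀ c1 c2 : ℝ, 0 ≤ c1 → c1 < c2 →
      Evar P g_e μ c2 < Evar P g_e μ c1 := by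
    intro c1 c2 h1 h12
    have hv := V_anti hP_cont hP_nonneg hP_int hmean_int hm2_int htail
      (t1 := c1 * μ) (t2 := c2 * μ) (mul_nonneg h1 hμ_pos.le) (by nlinarith)
    simp only [Evar]
    exact mul_lt_mul_of_pos_left hv (by positivity)
  -- feasible set
  set S : Set ℝ := Ici 0 ∩ (fun c => Eexp P g_e i_e μ c) ⁻¹' Iic E_max_exp with hS
  have hmemS : ∀ c : ℝ, c ∈ S ↔ 0 ≤ c ∧ Eexp P g_e i_e μ c ≤ E_max_exp := by
    intro c; simp [hS]
  have h0S : (0:ℝ) ∈ S := by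
    rw [hmemS]
    refine ⟨le_refl 0, ?_⟩
    simp only [Eexp, zero_mul, intervalIntegral.integral_same, mul_zero, add_zero]
    exact hEmax
  -- S is bounded above
  obtain ⟨t0, ht0pos, hMt0⟩ := H_unbounded hP_cont hP_nonneg
    (by rw [hP_norm]; norm_num) ((E_max_exp - μ * g_e) / i_e)
  set c0 : ℝ := t0 / μ with hc0
  have hc0pos : 0 < c0 := div_pos ht0pos hμ_pos
  have hc0μ : c0 * μ = t0 := by rw [hc0]; exact div_mul_cancel₀ t0 hμ_pos.ne'
  have hFc0 : E_max_exp < Eexp P g_e i_e μ c0 := by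
    simp only [Eexp, hc0μ]
    have h1 : (E_max_exp - μ * g_e) / i_e * i_e = E_max_exp - μ * g_e := by field_simp
    nlinarith
  have hbdd : BddAbove S := by
    refine ⟨c0, fun c hc => ?_⟩
    rw [hmemS] at hc
    by_contra hlt
    push_neg at hlt
    exact absurd (hc.2) (not_le.2 (lt_of_lt_of_le hFc0 (hFmono c0 c hc0pos.le hlt.le)))
  have hSclosed : IsClosed S :=
    isClosed_Ici.inter (isClosed_Iic.preimage hFcont)
  set cstar : ℝ := sSup S with hcstar
  have hcsS : cstar ∈ S := hSclosed.csSup_mem ⟨0, h0S⟩ hbdd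
  rw [hmemS] at hcsS
  obtain ⟨hcs0, hcsF⟩ := hcsS
  have hub : ∀ c ∈ S, c ≤ cstar := fun c hc => le_csSup hbdd hc
  -- Eexp cstar = E_max_exp
  have hFeq : Eexp P g_e i_e μ cstar = E_max_exp := by
    rcases lt_or_eq_of_le hcsF with hlt | heq
    · exfalso
      have hopen : IsOpen ((fun c => Eexp P g_e i_e μ c) ⁻¹' Iio E_max_exp) :=
        isOpen_Iio.preimage hFcont
      rw [Metric.isOpen_iff] at hopen
      obtain ⟨ε, hε, hball⟩ := hopen cstar hlt
      have hmem : cstar + ε / 2 ∈ Metric.ball cstar ε := by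
        simp only [Metric.mem_ball, Real.dist_eq, add_sub_cancel_left]
        rw [abs_of_pos (by positivity)]
        linarith
      have : cstar + ε / 2 ∈ S := by
        rw [hmemS]
        exact ⟨by linarith, le_of_lt (hball hmem)⟩
      have := hub _ this
      linarith
    · exact heq
  refine ⟨cstar, ⟨hcs0, hcsF, ?_⟩, ?_, hFeq⟩
  · intro c hc hcF
    rcases eq_or_lt_of_le (hub c ((hmemS c).2 ⟨hc, hcF⟩)) with h | h
    · rw [h]
    · exact (hVanti c cstar hc h).le
  · intro c ⟨hc0', hcF', hmin⟩
    have hcle : c ≤ cstar := hub c ((hmemS c).2 ⟨hc0', hcF'⟩)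
    rcases eq_or_lt_of_le hcle with h | h
    · exact h
    · exfalso
      have h1 : Evar P g_e μ cstar < Evar P g_e μ c := hVanti c cstar hc0' h
      have h2 : Evar P g_e μ c ≤ Evar P g_e μ cstar := hmin cstar hcs0 hcsF
      linarith
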